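/- Let A ∈ SL₂(ℤ) with |trace(A)| > 2. Then the semidirect product G = ℤ² ⋊_A ℤ is solvable, torsion-free, and not virtually nilpotent: no finite index subgroup of G is nilpotent. -/

import Mathlib

open Matrix

/-! ### Auxiliary matrix lemmas -/

private lemma solCH2 (M : Matrix (Fin 2) (Fin 2) ℤ) (h : M.det = 1) :
    M ^ 2 = M.trace • M - 1 := by
  rw [Matrix.det_fin_two] at h
  ext i j
  simp only [Matrix.sub_apply, Matrix.smul_apply, smul_eq_mul, pow_two, Matrix.mul_apply,
    Fin.sum_univ_two, Matrix.trace_fin_two]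
  fin_cases i <;> fin_cases j <;> simp [Matrix.one_apply] <;> nlinarith [h]

private lemma solTrRec (M : Matrix (Fin 2) (Fin 2) ℤ) (h : M.det = 1) (n : ℕ) :
    (M ^ (n + 2)).trace = M.trace * (M ^ (n + 1)).trace - (M ^ n).trace := by
  have : M ^ (n + 2) = M.trace • M ^ (n + 1) - M ^ n := by
    calc M ^ (n + 2) = M ^ n * M ^ 2 := by rw [← pow_add]
    _ = M ^ n * (M.trace • M - 1) := by rw [solCH2 M h]
    _ = M.trace • M ^ (n + 1) - M ^ n := by
        rw [Matrix.mul_sub, Matrix.mul_smul, mul_one, ← pow_succ]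
  rw [this, Matrix.trace_sub, Matrix.trace_smul, smul_eq_mul]

private lemma solTrBig (M : Matrix (Fin 2) (Fin 2) ℤ) (h : M.det = 1) (ht : 2 < |M.trace|)
    (n : ℕ) (hn : 1 ≤ n) : 2 < |(M ^ n).trace| := by
  have h3 : 3 ≤ |M.trace| := ht
  have key : ∀ m : ℕ, 2 < |(M ^ (m + 1)).trace| ∧
      |(M ^ (m + 1)).trace| < |(M ^ (m + 2)).trace| := by
    intro m
    induction m with
    | zero =>
      have h1 : (M ^ 1).trace = M.trace := by rw [pow_one]
      have h0 : (M ^ 0).trace = 2 := by simp [Matrix.trace_one]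
      have h2 : (M ^ 2).trace = M.trace * M.trace - 2 := by
        have := solTrRec M h 0; rw [h0, h1] at this; simpa using this
      constructor
      · rw [h1]; exact ht
      · rw [h1, h2]
        have : |M.trace * M.trace - 2| ≥ |M.trace| * |M.trace| - 2 := by
          have := abs_sub_abs_le_abs_sub (M.trace * M.trace) 2
          rw [abs_mul] at this
          simp only [abs_two] at this
          linarith
        nlinarith [abs_nonneg M.trace]
    | succ m ih =>
      obtain ⟨ih1, ih2⟩ := ih
      have hr := solTrRec M h (m + 1)
      have habs : |M.trace * (M ^ (m + 2)).trace - (M ^ (m + 1)).trace| ≥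
          |M.trace| * |(M ^ (m + 2)).trace| - |(M ^ (m + 1)).trace| := by
        have := abs_sub_abs_le_abs_sub (M.trace * (M ^ (m + 2)).trace) ((M ^ (m + 1)).trace)
        rw [abs_mul] at this; linarith
      constructor
      · linarith
      · rw [hr]; nlinarith
  obtain ⟨m, rfl⟩ := Nat.exists_eq_add_of_le hn
  have := (key m).1
  simpa [add_comm] using this

private lemma solDetSubOne (N : Matrix (Fin 2) (Fin 2) ℤ) (h : N.det = 1) :
    (N - 1).det = 2 - N.trace := by
  rw [Matrix.det_fin_two] at h ⊢
  simp only [Matrix.sub_apply, Matrix.one_apply, Matrix.trace_fin_two]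
  norm_num
  ring_nf
  linarith

private lemma solMulVecFix (N : Matrix (Fin 2) (Fin 2) ℤ) (hd : (N - 1).det ≠ 0)
    (v : Fin 2 → ℤ) (hv : N.mulVec v = v) : v = 0 := by
  have h0 : (N - 1).mulVec v = 0 := by
    rw [Matrix.sub_mulVec, hv, Matrix.one_mulVec, sub_self]
  have h1 : ((N - 1).adjugate * (N - 1)).mulVec v = 0 := by
    rw [← Matrix.mulVec_mulVec, h0, Matrix.mulVec_zero]
  rw [Matrix.adjugate_mul, Matrix.smul_mulVec, Matrix.one_mulVec] at h1
  funext i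
  have := congrFun h1 i
  simp only [Pi.smul_apply, smul_eq_mul, Pi.zero_apply] at this ⊢
  exact (mul_eq_zero.mp this).resolve_left hd

private lemma solMulVecPow (e : (Fin 2 → ℤ) ≃ₗ[ℤ] (Fin 2 → ℤ)) (v : Fin 2 → ℤ) (n : ℕ) :
    (LinearMap.toMatrix' (e : (Fin 2 → ℤ) →ₗ[ℤ] (Fin 2 → ℤ))) ^ n *ᵥ v = (e ^ n) v := by
  induction n with
  | zero => simp
  | succ n ih =>
    rw [pow_succ', ← Matrix.mulVec_mulVec, ih, pow_succ']
    have : ∀ w, (LinearMap.toMatrix' (e : (Fin 2 → ℤ) →ₗ[ℤ] (Fin 2 → ℤ))) *ᵥ w = e w := by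
      intro w
      rw [← Matrix.toLin'_apply, Matrix.toLin'_toMatrix']
      rfl
    rw [this]
    rfl

private lemma solNpowFix (e : (Fin 2 → ℤ) ≃ₗ[ℤ] (Fin 2 → ℤ))
    (hdet : LinearMap.det (e : (Fin 2 → ℤ) →ₗ[ℤ] (Fin 2 → ℤ)) = 1)
    (htr : 2 < |LinearMap.trace ℤ (Fin 2 → ℤ) (e : (Fin 2 → ℤ) →ₗ[ℤ] (Fin 2 → ℤ))|)
    (n : ℕ) (hn : 1 ≤ n) (v : Fin 2 → ℤ) (hv : (e ^ n) v = v) : v = 0 := by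
  set M := LinearMap.toMatrix' (e : (Fin 2 → ℤ) →ₗ[ℤ] (Fin 2 → ℤ)) with hM
  have hd : M.det = 1 := by rw [hM, LinearMap.det_toMatrix']; exact hdet
  have ht : 2 < |M.trace| := by
    have := LinearMap.trace_eq_matrix_trace ℤ (Pi.basisFun ℤ (Fin 2))
      (e : (Fin 2 → ℤ) →ₗ[ℤ] (Fin 2 → ℤ))
    rw [LinearMap.toMatrix_eq_toMatrix'] at this
    rw [hM, ← this]; exact htr
  have hfix : (M ^ n).mulVec v = v := by rw [solMulVecPow, hv]
  have hdn : (M ^ n).det = 1 := by rw [Matrix.det_pow, hd, one_pow]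
  have hne : (M ^ n - 1).det ≠ 0 := by
    rw [solDetSubOne _ hdn]
    have := solTrBig M hd ht n hn
    intro hc
    have h2 : (M ^ n).trace = 2 := by omega
    rw [h2] at this
    simp at this
  exact solMulVecFix _ hne v hfix

private lemma solZpowFix (e : (Fin 2 → ℤ) ≃ₗ[ℤ] (Fin 2 → ℤ))
    (hdet : LinearMap.det (e : (Fin 2 → ℤ) →ₗ[ℤ] (Fin 2 → ℤ)) = 1)
    (htr : 2 < |LinearMap.trace ℤ (Fin 2 → ℤ) (e : (Fin 2 → ℤ) →ₗ[ℤ] (Fin 2 → ℤ))|)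
    (k : ℤ) (hk : k ≠ 0) (v : Fin 2 → ℤ) (hv : (e ^ k) v = v) : v = 0 := by
  rcases lt_or_gt_of_ne hk with h | h
  · have hv' : (e ^ (-k)) v = v := by
      have h2 : (e ^ (-k) * e ^ k) v = (e ^ (-k)) v := by
        rw [show (e ^ (-k) * e ^ k) v = (e ^ (-k)) ((e ^ k) v) from rfl, hv]
      rw [← _root_.zpow_add, neg_add_cancel, zpow_zero] at h2
      simpa using h2.symm
    obtain ⟨n, hn⟩ : ∃ n : ℕ, (-k) = (n : ℤ) := ⟨(-k).toNat, by omega⟩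
    rw [hn, zpow_natCast] at hv'
    exact solNpowFix e hdet htr n (by omega) v hv'
  · obtain ⟨n, hn⟩ : ∃ n : ℕ, k = (n : ℤ) := ⟨k.toNat, by omega⟩
    rw [hn, zpow_natCast] at hv
    exact solNpowFix e hdet htr n (by omega) v hv

/-! ### Center of a nontrivial nilpotent group -/

open scoped commutatorElement in
private lemma solExistsCenterNeOne (G : Type*) [Group G] [Nontrivial G] [Group.IsNilpotent G] :
    ∃ z : G, z ∈ Subgroup.center G ∧ z ≠ 1 := by
  have hex := nilpotent_iff_lowerCentralSeries.mp (by infer_instance : Group.IsNilpotent G)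
  classical
  set n := Nat.find hex with hdefn
  have hn : (⊤ : Subgroup G).lowerCentralSeries n = ⊥ := Nat.find_spec hex
  have hn0 : n ≠ 0 := by
    intro h0
    rw [h0, lowerCentralSeries_zero] at hn
    obtain ⟨a, b, hab⟩ := exists_pair_ne G
    exact hab (by
      have ha : a ∈ (⊥ : Subgroup G) := hn ▸ Subgroup.mem_top a
      have hb : b ∈ (⊥ : Subgroup G) := hn ▸ Subgroup.mem_top b
      rw [Subgroup.mem_bot] at ha hb; rw [ha, hb])
  obtain ⟨m, hm⟩ : ∃ m, n = m + 1 := ⟨n - 1, by omega⟩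
  have hmne : (⊤ : Subgroup G).lowerCentralSeries m ≠ ⊥ := Nat.find_min hex (by omega)
  obtain ⟨⟨z, hz⟩, hz1⟩ := Subgroup.ne_bot_iff_exists_ne_one.mp hmne
  refine ⟨z, Subgroup.mem_center_iff.mpr fun g => ?_, fun h => hz1 (by ext; exact h)⟩
  have hcomm : ⁅z, g⁆ ∈ (⊤ : Subgroup G).lowerCentralSeries (m + 1) := by
    rw [lowerCentralSeries_succ]
    exact Subgroup.commutator_mem_commutator hz (Subgroup.mem_top g)
  rw [← hm, hn, Subgroup.mem_bot] at hcomm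
  exact (commutatorElement_eq_one_iff_mul_comm.mp hcomm).symm

/-! ### The statement -/

/-- The automorphism of `ℤ²` (written multiplicatively) induced by a linear
automorphism `e` of `ℤ²`. -/
def solAut (e : (Fin 2 → ℤ) ≃ₗ[ℤ] (Fin 2 → ℤ)) :
    MulAut (Multiplicative (Fin 2 → ℤ)) :=
  AddEquiv.toMultiplicative e.toAddEquiv

/-- The action of `ℤ` on `ℤ²` by powers of the automorphism `e`. -/
def solAction (e : (Fin 2 → ℤ) ≃ₗ[ℤ] (Fin 2 → ℤ)) :
    Multiplicative ℤ →* MulAut (Multiplicative (Fin 2 → ℤ)) :=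
  zpowersHom _ (solAut e)

/-- The Sol 3-manifold group `ℤ² ⋊_A ℤ` associated to `A = e`. -/
abbrev SolGroup (e : (Fin 2 → ℤ) ≃ₗ[ℤ] (Fin 2 → ℤ)) :=
  SemidirectProduct (Multiplicative (Fin 2 → ℤ)) (Multiplicative ℤ) (solAction e)

/-- The analogue of `solAut` as a monoid hom, used to compute powers. -/
private def solAutHom : ((Fin 2 → ℤ) ≃ₗ[ℤ] (Fin 2 → ℤ)) →*
    MulAut (Multiplicative (Fin 2 → ℤ)) where
  toFun f := AddEquiv.toMultiplicative f.toAddEquiv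
  map_one' := by ext x; rfl
  map_mul' f g := by ext x; rfl

private lemma solAut_zpow (e : (Fin 2 → ℤ) ≃ₗ[ℤ] (Fin 2 → ℤ)) (k : ℤ)
    (x : Multiplicative (Fin 2 → ℤ)) :
    ((solAut e) ^ k) x = Multiplicative.ofAdd ((e ^ k) (Multiplicative.toAdd x)) := by
  have h1 : solAut e = solAutHom e := rfl
  rw [h1, ← map_zpow]
  rfl

private lemma solAction_apply (e : (Fin 2 → ℤ) ≃ₗ[ℤ] (Fin 2 → ℤ)) (g : Multiplicative ℤ)
    (x : Multiplicative (Fin 2 → ℤ)) :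
    solAction e g x = Multiplicative.ofAdd ((e ^ (Multiplicative.toAdd g))
      (Multiplicative.toAdd x)) := by
  rw [show solAction e g = (solAut e) ^ (Multiplicative.toAdd g) from rfl, solAut_zpow]

/-- Let `A ∈ SL₂(ℤ)` with `|trace A| > 2`.  Then the semidirect product
`G = ℤ² ⋊_A ℤ` is solvable, torsion-free, and not virtually nilpotent: no finite
index subgroup of `G` is nilpotent. -/
theorem solGroup_solvable_torsionFree_not_virtually_nilpotent
    (e : (Fin 2 → ℤ) ≃ₗ[ℤ] (Fin 2 → ℤ))
    (hdet : LinearMap.det (e : (Fin 2 → ℤ) →ₗ[ℤ] (Fin 2 → ℤ)) = 1)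
    (htr : 2 < |LinearMap.trace ℤ (Fin 2 → ℤ) (e : (Fin 2 → ℤ) →ₗ[ℤ] (Fin 2 → ℤ))|) :
    IsSolvable (SolGroup e) ∧ (∀ g : SolGroup e, g ≠ 1 → ¬IsOfFinOrder g) ∧
    ¬ ∃ H : Subgroup (SolGroup e), H.FiniteIndex ∧ Group.IsNilpotent H := by
  refine ⟨?_, ?_, ?_⟩
  · -- solvable
    exact solvable_of_ker_le_range SemidirectProduct.inl SemidirectProduct.rightHom
      (le_of_eq (SemidirectProduct.range_inl_eq_ker_rightHom).symm)
  · -- torsion-free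
    intro g hg hfo
    obtain ⟨n, hn, hgn⟩ := isOfFinOrder_iff_pow_eq_one.mp hfo
    apply hg
    have hright : g.right = 1 := by
      have : g.right ^ n = 1 := by
        rw [← SemidirectProduct.rightHom_eq_right, ← map_pow, hgn, _root_.map_one]
      have h2 : (n : ℤ) * Multiplicative.toAdd g.right = 0 := by
        have := congrArg Multiplicative.toAdd this
        simpa [toAdd_pow, nsmul_eq_mul] using this
      have h3 : Multiplicative.toAdd g.right = 0 := by
        rcases mul_eq_zero.mp h2 with h | h
        · exact absurd (by exact_mod_cast h) (by omega)
        · exact h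
      have := congrArg Multiplicative.ofAdd h3
      simpa using this
    have hgeq : g = SemidirectProduct.inl g.left := by
      ext <;> simp [hright]
    have hleft : g.left ^ n = 1 := by
      have : (SemidirectProduct.inl (g.left ^ n) : SolGroup e) =
          SemidirectProduct.inl (1 : Multiplicative (Fin 2 → ℤ)) := by
        rw [map_pow, ← hgeq, hgn, _root_.map_one]
      exact SemidirectProduct.inl_injective (φ := solAction e) this
    have hleft0 : Multiplicative.toAdd g.left = 0 := by
      have h2 := congrArg Multiplicative.toAdd hleft
      simp only [toAdd_pow, toAdd_one] at h2
      funext i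
      have := congrFun h2 i
      simp only [Pi.smul_apply, nsmul_eq_mul, Pi.zero_apply] at this
      rcases mul_eq_zero.mp this with h | h
      · exact absurd (by exact_mod_cast h) (by omega : (n : ℤ) ≠ 0)
      · exact h
    have : g.left = 1 := by
      have := congrArg Multiplicative.ofAdd hleft0
      simpa using this
    rw [hgeq, this, _root_.map_one]
  · -- not virtually nilpotent
    rintro ⟨H, hfi, hnil⟩
    haveI := hfi
    haveI : Finite (SolGroup e ⧸ H) := Subgroup.finite_quotient_of_finiteIndex (H := H)
    -- an element of H with nontrivial ℤ-part
    obtain ⟨a, b, hab, heq⟩ := Finite.exists_ne_map_eq_of_infinite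
      (fun n : ℤ => (QuotientGroup.mk (SemidirectProduct.inr
        (Multiplicative.ofAdd n) : SolGroup e) : SolGroup e ⧸ H))
    have htH : (SemidirectProduct.inr (Multiplicative.ofAdd a) : SolGroup e)⁻¹ *
        SemidirectProduct.inr (Multiplicative.ofAdd b) ∈ H := QuotientGroup.eq.mp heq
    set t : SolGroup e := (SemidirectProduct.inr (Multiplicative.ofAdd a))⁻¹ *
        SemidirectProduct.inr (Multiplicative.ofAdd b) with ht
    have htright : Multiplicative.toAdd t.right = b - a := by
      simp [ht, sub_eq_neg_add]
    have htrne : Multiplicative.toAdd t.right ≠ 0 := by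
      rw [htright]; intro h; exact hab (by omega)
    -- an element of H with nontrivial ℤ²-part
    obtain ⟨c, d, hcd, heq2⟩ := Finite.exists_ne_map_eq_of_infinite
      (fun n : ℤ => (QuotientGroup.mk (SemidirectProduct.inl
        (Multiplicative.ofAdd (fun _ => n : Fin 2 → ℤ)) : SolGroup e) : SolGroup e ⧸ H))
    have hwH : (SemidirectProduct.inl (Multiplicative.ofAdd (fun _ => c : Fin 2 → ℤ))
        : SolGroup e)⁻¹ *
        SemidirectProduct.inl (Multiplicative.ofAdd (fun _ => d : Fin 2 → ℤ)) ∈ H :=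
      QuotientGroup.eq.mp heq2
    set u : SolGroup e := (SemidirectProduct.inl
        (Multiplicative.ofAdd (fun _ => c : Fin 2 → ℤ)))⁻¹ *
        SemidirectProduct.inl (Multiplicative.ofAdd (fun _ => d : Fin 2 → ℤ)) with hu
    have huleft : Multiplicative.toAdd u.left = (fun _ => d - c : Fin 2 → ℤ) := by
      funext i
      simp [hu, sub_eq_neg_add]
    have huleftne : Multiplicative.toAdd u.left ≠ 0 := by
      rw [huleft]
      intro h
      have := congrFun h 0
      simp only [Pi.zero_apply] at this
      exact hcd (by omega)
    have huright : u.right = 1 := by simp [hu]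
    -- H is nontrivial
    have htne1 : t ≠ 1 := by
      intro hc
      apply htrne
      rw [hc]
      rfl
    haveI : Nontrivial H := ⟨⟨t, htH⟩, 1, fun hc => htne1 (by
      have := congrArg Subtype.val hc
      simpa using this)⟩
    haveI := hnil
    obtain ⟨z, hzc, hz1⟩ := solExistsCenterNeOne H
    set g : SolGroup e := (z : SolGroup e) with hgdef
    have hcomm : ∀ h : SolGroup e, h ∈ H → h * g = g * h := by
      intro h hh
      have := Subgroup.mem_center_iff.mp hzc ⟨h, hh⟩
      exact congrArg Subtype.val this
    -- first: the ℤ-part of g is trivial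
    have hgright : Multiplicative.toAdd g.right = 0 := by
      by_contra hne
      have h1 := hcomm u hwH
      have h2 := congrArg SemidirectProduct.left h1
      simp only [SemidirectProduct.mul_left] at h2
      rw [huright, _root_.map_one, MulAut.one_apply] at h2
      have h3 : solAction e g.right u.left = u.left := by
        have : g.left * solAction e g.right u.left = g.left * u.left := by
          rw [h2.symm, mul_comm]
        exact mul_left_cancel this
      rw [solAction_apply] at h3
      have h4 : (e ^ Multiplicative.toAdd g.right) (Multiplicative.toAdd u.left) =
          Multiplicative.toAdd u.left := by
        have := congrArg Multiplicative.toAdd h3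
        simpa using this
      exact huleftne (solZpowFix e hdet htr _ hne _ h4)
    have hgright1 : g.right = 1 := by
      have := congrArg Multiplicative.ofAdd hgright
      simpa using this
    -- second: the ℤ²-part of g is trivial
    have hgleft : Multiplicative.toAdd g.left = 0 := by
      have h1 := hcomm t htH
      have h2 := congrArg SemidirectProduct.left h1
      simp only [SemidirectProduct.mul_left] at h2
      rw [hgright1, _root_.map_one, MulAut.one_apply] at h2
      have h3 : solAction e t.right g.left = g.left := by
        have : t.left * solAction e t.right g.left = t.left * g.left := by
          rw [h2, mul_comm]
        exact mul_left_cancel this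
      rw [solAction_apply] at h3
      have h4 : (e ^ Multiplicative.toAdd t.right) (Multiplicative.toAdd g.left) =
          Multiplicative.toAdd g.left := by
        have := congrArg Multiplicative.toAdd h3
        simpa using this
      exact solZpowFix e hdet htr _ htrne _ h4
    apply hz1
    have : g = 1 := by
      ext : 1
      · have := congrArg Multiplicative.ofAdd hgleft
        simpa using this
      · exact hgright1
    exact Subtype.ext this
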